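/- With A^co = R^{1/2}(I_K − 1_K r') Σ^co as above, the (K+1)×K matrix Ã^co obtained by appending the row 1_K' to A^co has full column rank K. -/

import Mathlib

open scoped BigOperators
open Matrix

theorem stmt15 {K : ℕ} (Sco : Matrix (Fin K) (Fin K) ℝ) (hco : Sco.PosDef)
    (r : Fin K → ℝ) (hr : ∀ k, 0 < r k) (hrsum : ∑ k, r k = 1) :
    let Aco : Matrix (Fin K) (Fin K) ℝ :=
      Matrix.diagonal (fun k => Real.sqrt (r k)) *
        ((1 : Matrix (Fin K) (Fin K) ℝ) - vecMulVec (fun _ => 1) r) * Sco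
    let Atilde : Matrix (Fin (K + 1)) (Fin K) ℝ :=
      Matrix.of (Fin.snoc (fun i => Aco i) (fun _ => (1 : ℝ)))
    Atilde.rank = K := by
  intro Aco Atilde
  have hker : ∀ x : Fin K → ℝ, Atilde.mulVec x = 0 → x = 0 := by
    intro x hx
    by_contra hx0
    have hAco : Aco.mulVec x = 0 := by
      funext i
      have h := congrFun hx (Fin.castSucc i)
      simpa [Atilde, Matrix.mulVec, dotProduct, Fin.snoc_castSucc] using h
    have hsum : ∑ j, x j = 0 := by
      have h := congrFun hx (Fin.last K)
      simpa [Atilde, Matrix.mulVec, dotProduct, Fin.snoc_last] using h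
    set y := Sco.mulVec x with hy
    set c := ∑ j, r j * y j with hc
    have hyc : ∀ i, y i = c := by
      intro i
      have h1 : Aco.mulVec x i = Real.sqrt (r i) * (y i - c) := by
        have : Aco.mulVec x =
            (Matrix.diagonal (fun k => Real.sqrt (r k))).mulVec
              (((1 : Matrix (Fin K) (Fin K) ℝ) - vecMulVec (fun _ => 1) r).mulVec y) := by
          simp [Aco, ← Matrix.mulVec_mulVec, hy]
        rw [this]
        simp [Matrix.mulVec, dotProduct, Matrix.diagonal, vecMulVec,
          Matrix.sub_apply, Matrix.one_apply, Finset.sum_sub_distrib, hc,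
          Finset.mul_sum, mul_sub, sub_mul, mul_ite, ite_mul, mul_zero, zero_mul,
          Finset.sum_ite_eq, mul_assoc]
      have h2 := congrFun hAco i
      rw [h1] at h2
      have hs : Real.sqrt (r i) ≠ 0 := ne_of_gt (Real.sqrt_pos.mpr (hr i))
      rcases mul_eq_zero.mp h2 with h | h
      · exact absurd h hs
      · linarith
    have hdot : x ⬝ᵥ y = 0 := by
      have : x ⬝ᵥ y = (∑ j, x j) * c := by
        simp only [dotProduct]
        rw [Finset.sum_mul]
        exact Finset.sum_congr rfl fun j _ => by rw [hyc j]
      rw [this, hsum, zero_mul]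
    have hpos := hco.dotProduct_mulVec_pos hx0
    rw [show star x = x from rfl] at hpos
    simp only [← hy] at hpos
    rw [hdot] at hpos
    simp at hpos
  have hkerbot : LinearMap.ker Atilde.mulVecLin = ⊥ := by
    rw [LinearMap.ker_eq_bot']
    intro x hx
    exact hker x hx
  have hrn := LinearMap.finrank_range_add_finrank_ker Atilde.mulVecLin
  rw [hkerbot, finrank_bot, add_zero] at hrn
  rw [Matrix.rank]
  simpa using hrn
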